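/- Every Druzkowski matrix A belongs to the class 𝒵: for every λ ∈ ℝ, the only solution of x + λ(Ax)^3 = 0 is x = 0. -/

import Mathlib

open Filter Matrix Polynomial

noncomputable def lmap {m : ℕ} (A : Matrix (Fin m) (Fin m) ℝ) (i : Fin m) :
    (Fin m → ℝ) →L[ℝ] ℝ :=
  LinearMap.toContinuousLinearMap ((LinearMap.proj i).comp A.mulVecLin)

lemma lmap_apply {m : ℕ} (A : Matrix (Fin m) (Fin m) ℝ) (i : Fin m) (z : Fin m → ℝ) :
    lmap A i z = A.mulVec z i := rfl

lemma hasFDerivAt_F {m : ℕ} (A : Matrix (Fin m) (Fin m) ℝ) (y : Fin m → ℝ) :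
    HasFDerivAt (fun z : Fin m → ℝ => z + fun i => (A.mulVec z i) ^ 3)
      (ContinuousLinearMap.id ℝ (Fin m → ℝ) +
        ContinuousLinearMap.pi fun i => (3 * (A.mulVec y i) ^ 2) • lmap A i) y := by
  apply (hasFDerivAt_id y).add
  apply hasFDerivAt_pi.2
  intro i
  have h1 : HasFDerivAt (fun z => lmap A i z) (lmap A i) y := (lmap A i).hasFDerivAt
  have h2 := (hasDerivAt_pow 3 (lmap A i y)).comp_hasFDerivAt y h1
  simp only [lmap_apply] at h2 ⊢
  refine h2.congr_fderiv ?_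
  norm_num

lemma det_jac {m : ℕ} (A : Matrix (Fin m) (Fin m) ℝ) (y : Fin m → ℝ) :
    LinearMap.det (fderiv ℝ (fun z : Fin m → ℝ => z + fun i => (A.mulVec z i) ^ 3) y
      : (Fin m → ℝ) →ₗ[ℝ] (Fin m → ℝ)) =
    Matrix.det (1 + Matrix.of fun i j => 3 * (A.mulVec y i) ^ 2 * A i j) := by
  rw [(hasFDerivAt_F A y).fderiv, ← LinearMap.det_toLin']
  congr 1
  apply LinearMap.ext; intro v
  funext i
  simp only [Matrix.toLin'_apply, Matrix.add_mulVec, Matrix.one_mulVec,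
    ContinuousLinearMap.coe_coe, ContinuousLinearMap.add_apply,
    ContinuousLinearMap.coe_id', id_eq, ContinuousLinearMap.pi_apply,
    ContinuousLinearMap.smul_apply, lmap_apply, Pi.add_apply, smul_eq_mul]
  congr 1
  simp only [Matrix.mulVec, dotProduct, Matrix.of_apply, Finset.mul_sum]
  exact Finset.sum_congr rfl fun j _ => by ring

theorem stmt6 {m : ℕ} (A : Matrix (Fin m) (Fin m) ℝ)
    (hDruz : ∀ x : Fin m → ℝ,
      LinearMap.det (fderiv ℝ (fun y : Fin m → ℝ => y + fun i => (A.mulVec y i) ^ 3) x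
        : (Fin m → ℝ) →ₗ[ℝ] (Fin m → ℝ)) = 1) :
    ∀ (lam : ℝ) (x : Fin m → ℝ),
      x + (fun i => lam * (A.mulVec x i) ^ 3) = 0 → x = 0 := by
  intro lam x hx
  set a : Fin m → ℝ := A.mulVec x with ha
  set M : Matrix (Fin m) (Fin m) ℝ := Matrix.of (fun i j => (a i) ^ 2 * A i j) with hM
  have key : ∀ s : ℝ, 0 ≤ s → Matrix.det (1 + s • M) = 1 := by
    intro s hs
    have h := hDruz ((Real.sqrt (s / 3)) • x)
    rw [det_jac] at h
    rw [← h]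
    congr 2
    funext i j
    have hmv : A.mulVec (Real.sqrt (s / 3) • x) = Real.sqrt (s / 3) • a := by
      rw [ha, Matrix.mulVec_smul]
    simp only [Matrix.smul_apply, Matrix.of_apply, hmv, Pi.smul_apply, smul_eq_mul, mul_pow]
    rw [Real.sq_sqrt (by linarith : (0:ℝ) ≤ s / 3)]
    simp only [hM, Matrix.of_apply]
    ring
  have poly : Matrix.det (1 + lam • M) = 1 := by
    set P : ℝ[X] := Matrix.det ((1 : Matrix (Fin m) (Fin m) ℝ[X]) + (X : ℝ[X]) • M.map C) with hP
    have hev : ∀ s : ℝ, P.eval s = Matrix.det (1 + s • M) := by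
      intro s
      have := RingHom.map_det (evalRingHom s)
        ((1 : Matrix (Fin m) (Fin m) ℝ[X]) + (X : ℝ[X]) • M.map C)
      rw [hP]
      simp only [← Polynomial.coe_evalRingHom]
      rw [this]
      congr 1
      funext i j
      simp [Matrix.map_apply, Matrix.add_apply, Matrix.smul_apply, Matrix.one_apply]
      split <;> simp [mul_comm]
    have hPC : P = Polynomial.C 1 := by
      have hsub : Set.Ici (0:ℝ) ⊆ {x | eval x P = eval x (C 1)} := by
        intro s hs
        simp only [Set.mem_setOf_eq, eval_C, hev s, key s hs]
      exact Polynomial.eq_of_infinite_eval_eq _ _ (Set.Infinite.mono hsub (Set.Ici_infinite 0))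
    have := hev lam
    rw [hPC] at this
    simpa using this.symm
  have hBx : (1 + lam • M).mulVec x = 0 := by
    funext i
    have hxi := congrFun hx i
    simp only [Pi.add_apply, Pi.zero_apply] at hxi
    simp only [Matrix.add_mulVec, Matrix.one_mulVec, Matrix.smul_mulVec,
      Pi.add_apply, Pi.smul_apply, smul_eq_mul, Pi.zero_apply]
    have hMx : M.mulVec x i = a i ^ 3 := by
      simp only [hM, Matrix.mulVec, dotProduct, Matrix.of_apply, mul_assoc,
        ← Finset.mul_sum]
      have h4 : ∑ j, A i j * x j = a i := rfl
      rw [h4]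
      ring
    rw [hMx]
    linarith [hxi]
  have hu : IsUnit (1 + lam • M).det := by rw [poly]; exact isUnit_one
  have : (1 + lam • M)⁻¹.mulVec ((1 + lam • M).mulVec x) = x := by
    rw [Matrix.mulVec_mulVec, Matrix.nonsing_inv_mul _ hu, Matrix.one_mulVec]
  rw [hBx, Matrix.mulVec_zero] at this
  exact this.symm
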